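/- For k ∈ {1,2,3}, let {a,b} = {1,2,3} \ {k} with a < b, and define the 3×3 complex matrices X⁽ᵏ⁾ = E_{ab} + E_{ba}, Y⁽ᵏ⁾ = −i·E_{ab} + i·E_{ba}, and Z⁽ᵏ⁾ = E_{aa} − E_{bb}, where E_{pq} is the matrix unit with 1 in entry (p,q). Then for every separable state ρ on ℂ³ ⊗ ℂ³, ∑_{i=1}^3 ∑_{j=1}^3 ( |tr(ρ (X⁽ⁱ⁾⊗X⁽ʲ⁾))| + |tr(ρ (Y⁽ⁱ⁾⊗Y⁽ʲ⁾))| + |tr(ρ (Z⁽ⁱ⁾⊗Z⁽ʲ⁾))| ) ≤ 4. -/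

import Mathlib

open Matrix Kronecker
open scoped ComplexOrder

noncomputable section

/-- The matrix unit `E_{pq}` in 3×3 complex matrices. -/
def E3 (p q : Fin 3) : Matrix (Fin 3) (Fin 3) ℂ := Matrix.single p q 1

/-- `X⁽ᵏ⁾` : Pauli X on the 2-dimensional subspace of ℂ³ omitting direction `k`
(0-indexed: `subX 0 = X⁽¹⁾`, etc.). -/
def subX : Fin 3 → Matrix (Fin 3) (Fin 3) ℂ :=
  ![E3 1 2 + E3 2 1, E3 0 2 + E3 2 0, E3 0 1 + E3 1 0]

/-- `Y⁽ᵏ⁾` : Pauli Y on the 2-dimensional subspace of ℂ³ omitting direction `k`. -/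
def subY : Fin 3 → Matrix (Fin 3) (Fin 3) ℂ :=
  ![Matrix.single 1 2 (-Complex.I) + Matrix.single 2 1 Complex.I,
    Matrix.single 0 2 (-Complex.I) + Matrix.single 2 0 Complex.I,
    Matrix.single 0 1 (-Complex.I) + Matrix.single 1 0 Complex.I]

/-- `Z⁽ᵏ⁾` : Pauli Z on the 2-dimensional subspace of ℂ³ omitting direction `k`. -/
def subZ : Fin 3 → Matrix (Fin 3) (Fin 3) ℂ :=
  ![E3 1 1 - E3 2 2, E3 0 0 - E3 2 2, E3 0 0 - E3 1 1]



open Matrix Kronecker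
open scoped ComplexOrder

noncomputable def col3 (B : Matrix (Fin 3) (Fin 3) ℂ) (a : Fin 3) : EuclideanSpace ℂ (Fin 3) :=
  WithLp.toLp 2 (fun k => B k a)

private lemma inner_col (B : Matrix (Fin 3) (Fin 3) ℂ) (a b : Fin 3) :
    (Bᴴ * B) a b = inner (𝕜 := ℂ) (col3 B a) (col3 B b) := by
  simp [Matrix.mul_apply, PiLp.inner_apply, Matrix.conjTranspose_apply, col3, mul_comm]

private lemma diag_eq (B : Matrix (Fin 3) (Fin 3) ℂ) (a : Fin 3) :
    ((Bᴴ * B) a a).re = ‖col3 B a‖ ^ 2 := by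
  rw [inner_col, inner_self_eq_norm_sq_to_K (𝕜 := ℂ)]
  norm_cast

lemma entry_sq_le (M : Matrix (Fin 3) (Fin 3) ℂ) (hM : M.PosSemidef) (a b : Fin 3) :
    ‖M a b‖ ^ 2 ≤ (M a a).re * (M b b).re := by
  obtain ⟨B, rfl⟩ : ∃ B : Matrix (Fin 3) (Fin 3) ℂ, M = Bᴴ * B := by
    open MatrixOrder in exact CStarAlgebra.nonneg_iff_eq_star_mul_self.mp hM.nonneg
  rw [diag_eq, diag_eq, inner_col]
  have h1 : ‖inner (𝕜 := ℂ) (col3 B a) (col3 B b)‖ ≤ ‖col3 B a‖ * ‖col3 B b‖ := by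
    exact norm_inner_le_norm _ _
  calc ‖_‖ ^ 2 ≤ (‖col3 B a‖ * ‖col3 B b‖) ^ 2 :=
        pow_le_pow_left₀ (norm_nonneg _) h1 2
    _ = _ := by ring

lemma diag_re_nonneg (M : Matrix (Fin 3) (Fin 3) ℂ) (hM : M.PosSemidef) (a : Fin 3) :
    0 ≤ (M a a).re := by
  obtain ⟨B, rfl⟩ : ∃ B : Matrix (Fin 3) (Fin 3) ℂ, M = Bᴴ * B := by
    open MatrixOrder in exact CStarAlgebra.nonneg_iff_eq_star_mul_self.mp hM.nonneg
  rw [diag_eq]; positivity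


lemma cross_cs (x y X Y r s : ℝ) (hx : 0 ≤ x) (hy : 0 ≤ y) (hX : 0 ≤ X) (hY : 0 ≤ Y)
    (hr : 0 ≤ r) (hs : 0 ≤ s) (h1 : x^2 + y^2 ≤ r^2) (h2 : X^2 + Y^2 ≤ s^2) :
    x*X + y*Y ≤ r*s := by
  nlinarith [sq_nonneg (x*Y - y*X), mul_nonneg hr hs, sq_nonneg (x*X + y*Y + r*s),
    mul_nonneg (mul_nonneg hx hX) (mul_nonneg hy hY)]

lemma core (a b c A1 A2 A3 B1 B2 B3 : ℝ)
    (ha : 0 ≤ a) (hb : 0 ≤ b) (hc : 0 ≤ c)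
    (hA1 : 0 ≤ A1) (hA2 : 0 ≤ A2) (hA3 : 0 ≤ A3)
    (hB1 : 0 ≤ B1) (hB2 : 0 ≤ B2) (hB3 : 0 ≤ B3)
    (h1 : A1^2 + B1^2 ≤ (b*c)^2) (h2 : A2^2 + B2^2 ≤ (a*c)^2) (h3 : A3^2 + B3^2 ≤ (a*b)^2) :
    (A1+A2+A3)^2 + (B1+B2+B3)^2 + (a^2-c^2)^2 ≤ (a^2+b^2+c^2)^2 := by
  have h12 : A1*A2 + B1*B2 ≤ (b*c)*(a*c) :=
    cross_cs _ _ _ _ _ _ hA1 hB1 hA2 hB2 (mul_nonneg hb hc) (mul_nonneg ha hc) h1 h2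
  have h13 : A1*A3 + B1*B3 ≤ (b*c)*(a*b) :=
    cross_cs _ _ _ _ _ _ hA1 hB1 hA3 hB3 (mul_nonneg hb hc) (mul_nonneg ha hb) h1 h3
  have h23 : A2*A3 + B2*B3 ≤ (a*c)*(a*b) :=
    cross_cs _ _ _ _ _ _ hA2 hB2 hA3 hB3 (mul_nonneg ha hc) (mul_nonneg ha hb) h2 h3
  nlinarith [sq_nonneg (b^2 - a*c), sq_nonneg (c*(a-b)), sq_nonneg (a*(b-c))]


set_option maxHeartbeats 1000000 in
lemma real_main (p0 p1 p2 A1 A2 A3 B1 B2 B3 : ℝ)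
    (hp0 : 0 ≤ p0) (hp1 : 0 ≤ p1) (hp2 : 0 ≤ p2) (hsum : p0 + p1 + p2 = 1)
    (hA1 : 0 ≤ A1) (hA2 : 0 ≤ A2) (hA3 : 0 ≤ A3)
    (hB1 : 0 ≤ B1) (hB2 : 0 ≤ B2) (hB3 : 0 ≤ B3)
    (h1 : A1^2 + B1^2 ≤ p1*p2) (h2 : A2^2 + B2^2 ≤ p0*p2) (h3 : A3^2 + B3^2 ≤ p0*p1) :
    (2*(A1+A2+A3))^2 + (2*(B1+B2+B3))^2 + (|p1-p2| + |p0-p2| + |p0-p1|)^2 ≤ 4 := by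
  obtain ⟨q0, n0, e0⟩ : ∃ q, 0 ≤ q ∧ q^2 = p0 := ⟨Real.sqrt p0, Real.sqrt_nonneg _, Real.sq_sqrt hp0⟩
  obtain ⟨q1, n1, e1⟩ : ∃ q, 0 ≤ q ∧ q^2 = p1 := ⟨Real.sqrt p1, Real.sqrt_nonneg _, Real.sq_sqrt hp1⟩
  obtain ⟨q2, n2, e2⟩ : ∃ q, 0 ≤ q ∧ q^2 = p2 := ⟨Real.sqrt p2, Real.sqrt_nonneg _, Real.sq_sqrt hp2⟩
  subst e0 e1 e2
  have h1' : A1^2 + B1^2 ≤ (q1*q2)^2 := by rw [mul_pow]; exact h1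
  have h2' : A2^2 + B2^2 ≤ (q0*q2)^2 := by rw [mul_pow]; exact h2
  have h3' : A3^2 + B3^2 ≤ (q0*q1)^2 := by rw [mul_pow]; exact h3
  have h1'' : A1^2 + B1^2 ≤ (q2*q1)^2 := by rw [mul_comm]; exact h1'
  have h2'' : A2^2 + B2^2 ≤ (q2*q0)^2 := by rw [mul_comm]; exact h2'
  have h3'' : A3^2 + B3^2 ≤ (q1*q0)^2 := by rw [mul_comm]; exact h3'
  rcases le_total (q0^2) (q1^2) with h01 | h01 <;> rcases le_total (q1^2) (q2^2) with h12 | h12 <;>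
    rcases le_total (q0^2) (q2^2) with h02 | h02
  · -- max p2, min p0
    rw [abs_of_nonpos (by linarith), abs_of_nonpos (by linarith), abs_of_nonpos (by linarith)]
    have key := core q2 q1 q0 A3 A2 A1 B3 B2 B1 n2 n1 n0 hA3 hA2 hA1 hB3 hB2 hB1 h3'' h2'' h1''
    rw [show q2^2+q1^2+q0^2 = 1 by linarith] at key
    ring_nf at key ⊢; linarith [key]
  · rw [abs_of_nonpos (by linarith), abs_of_nonpos (by linarith), abs_of_nonpos (by linarith)]
    have key := core q2 q1 q0 A3 A2 A1 B3 B2 B1 n2 n1 n0 hA3 hA2 hA1 hB3 hB2 hB1 h3'' h2'' h1''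
    rw [show q2^2+q1^2+q0^2 = 1 by linarith] at key
    ring_nf at key ⊢; linarith [key]
  · -- max p1, min p0
    rw [abs_of_nonneg (by linarith), abs_of_nonpos (by linarith), abs_of_nonpos (by linarith)]
    have key := core q1 q2 q0 A2 A3 A1 B2 B3 B1 n1 n2 n0 hA2 hA3 hA1 hB2 hB3 hB1 h2'' h3'' h1'
    rw [show q1^2+q2^2+q0^2 = 1 by linarith] at key
    ring_nf at key ⊢; linarith [key]
  · -- max p1, min p2
    rw [abs_of_nonneg (by linarith), abs_of_nonneg (by linarith), abs_of_nonpos (by linarith)]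
    have key := core q1 q0 q2 A2 A1 A3 B2 B1 B3 n1 n0 n2 hA2 hA1 hA3 hB2 hB1 hB3 h2' h1' h3''
    rw [show q1^2+q0^2+q2^2 = 1 by linarith] at key
    ring_nf at key ⊢; linarith [key]
  · -- max p2, min p1
    rw [abs_of_nonpos (by linarith), abs_of_nonpos (by linarith), abs_of_nonneg (by linarith)]
    have key := core q2 q0 q1 A3 A1 A2 B3 B1 B2 n2 n0 n1 hA3 hA1 hA2 hB3 hB1 hB2 h3' h1'' h2''
    rw [show q2^2+q0^2+q1^2 = 1 by linarith] at key
    ring_nf at key ⊢; linarith [key]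
  · -- max p0, min p1
    rw [abs_of_nonpos (by linarith), abs_of_nonneg (by linarith), abs_of_nonneg (by linarith)]
    have key := core q0 q2 q1 A1 A3 A2 B1 B3 B2 n0 n2 n1 hA1 hA3 hA2 hB1 hB3 hB2 h1'' h3' h2'
    rw [show q0^2+q2^2+q1^2 = 1 by linarith] at key
    ring_nf at key ⊢; linarith [key]
  · -- degenerate
    rw [abs_of_nonneg (by linarith), abs_of_nonpos (by linarith), abs_of_nonneg (by linarith)]
    have key := core q0 q1 q2 A1 A2 A3 B1 B2 B3 n0 n1 n2 hA1 hA2 hA3 hB1 hB2 hB3 h1' h2' h3'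
    rw [show q0^2+q1^2+q2^2 = 1 by linarith] at key
    have hh : 0 ≤ (q0^2 - q2^2)^2 := sq_nonneg _
    ring_nf at key hh ⊢; linarith [key, hh]
  · -- max p0, min p2
    rw [abs_of_nonneg (by linarith), abs_of_nonneg (by linarith), abs_of_nonneg (by linarith)]
    have key := core q0 q1 q2 A1 A2 A3 B1 B2 B3 n0 n1 n2 hA1 hA2 hA3 hB1 hB2 hB3 h1' h2' h3'
    rw [show q0^2+q1^2+q2^2 = 1 by linarith] at key
    ring_nf at key ⊢; linarith [key]

lemma imdiag (σ : Matrix (Fin 3) (Fin 3) ℂ) (hσ : σ.IsHermitian) (a : Fin 3) :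
    (σ a a).im = 0 := by
  have := congrArg Complex.im (hσ.apply a a)
  simp at this; linarith

lemma trX_eq (σ : Matrix (Fin 3) (Fin 3) ℂ) (hσ : σ.IsHermitian) (k a b : Fin 3)
    (h : (σ * subX k).trace = σ b a + σ a b) :
    (σ * subX k).trace = ((2*(σ a b).re : ℝ) : ℂ) := by
  rw [h, ← hσ.apply a b]; apply Complex.ext <;> simp <;> ring

lemma trY_eq (σ : Matrix (Fin 3) (Fin 3) ℂ) (hσ : σ.IsHermitian) (k a b : Fin 3)
    (h : (σ * subY k).trace = -Complex.I * σ b a + Complex.I * σ a b) :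
    (σ * subY k).trace = ((-2*(σ a b).im : ℝ) : ℂ) := by
  rw [h, ← hσ.apply a b]; apply Complex.ext <;> simp <;> ring

lemma trZ_eq (σ : Matrix (Fin 3) (Fin 3) ℂ) (hσ : σ.IsHermitian) (k a b : Fin 3)
    (h : (σ * subZ k).trace = σ a a - σ b b) :
    (σ * subZ k).trace = (((σ a a).re - (σ b b).re : ℝ) : ℂ) := by
  rw [h]; apply Complex.ext <;> simp [imdiag σ hσ]

lemma absX (σ : Matrix (Fin 3) (Fin 3) ℂ) (hσ : σ.IsHermitian) (k a b : Fin 3)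
    (h : (σ * subX k).trace = σ b a + σ a b) :
    ‖(σ * subX k).trace‖ = 2*|(σ a b).re| := by
  rw [trX_eq σ hσ k a b h, Complex.norm_real, Real.norm_eq_abs, abs_mul]; norm_num

lemma absY (σ : Matrix (Fin 3) (Fin 3) ℂ) (hσ : σ.IsHermitian) (k a b : Fin 3)
    (h : (σ * subY k).trace = -Complex.I * σ b a + Complex.I * σ a b) :
    ‖(σ * subY k).trace‖ = 2*|(σ a b).im| := by
  rw [trY_eq σ hσ k a b h, Complex.norm_real, Real.norm_eq_abs, abs_mul]; norm_num

lemma absZ (σ : Matrix (Fin 3) (Fin 3) ℂ) (hσ : σ.IsHermitian) (k a b : Fin 3)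
    (h : (σ * subZ k).trace = σ a a - σ b b) :
    ‖(σ * subZ k).trace‖ = |(σ a a).re - (σ b b).re| := by
  rw [trZ_eq σ hσ k a b h, Complex.norm_real, Real.norm_eq_abs]

set_option maxHeartbeats 1000000 in
lemma state_bound (σ : Matrix (Fin 3) (Fin 3) ℂ) (hσ : σ.PosSemidef) (htr : σ.trace = 1) :
    (∑ k, ‖(σ * subX k).trace‖)^2 + (∑ k, ‖(σ * subY k).trace‖)^2 +
    (∑ k, ‖(σ * subZ k).trace‖)^2 ≤ 4 := by
  have herm := hσ.1
  have hX0 := absX σ herm 0 1 2 (by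
    simp [subX, E3, Matrix.trace, Matrix.mul_apply, Fin.sum_univ_three, Matrix.single, Matrix.diag]; ring)
  have hX1 := absX σ herm 1 0 2 (by
    simp [subX, E3, Matrix.trace, Matrix.mul_apply, Fin.sum_univ_three, Matrix.single, Matrix.diag]; ring)
  have hX2 := absX σ herm 2 0 1 (by
    simp [subX, E3, Matrix.trace, Matrix.mul_apply, Fin.sum_univ_three, Matrix.single, Matrix.diag]; ring)
  have hY0 := absY σ herm 0 1 2 (by
    simp [subY, Matrix.trace, Matrix.mul_apply, Fin.sum_univ_three, Matrix.single, Matrix.diag]; ring)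
  have hY1 := absY σ herm 1 0 2 (by
    simp [subY, Matrix.trace, Matrix.mul_apply, Fin.sum_univ_three, Matrix.single, Matrix.diag]; ring)
  have hY2 := absY σ herm 2 0 1 (by
    simp [subY, Matrix.trace, Matrix.mul_apply, Fin.sum_univ_three, Matrix.single, Matrix.diag]; ring)
  have hZ0 := absZ σ herm 0 1 2 (by
    simp [subZ, E3, Matrix.trace, Matrix.mul_apply, Fin.sum_univ_three, Matrix.single, Matrix.diag]; ring)
  have hZ1 := absZ σ herm 1 0 2 (by
    simp [subZ, E3, Matrix.trace, Matrix.mul_apply, Fin.sum_univ_three, Matrix.single, Matrix.diag]; ring)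
  have hZ2 := absZ σ herm 2 0 1 (by
    simp [subZ, E3, Matrix.trace, Matrix.mul_apply, Fin.sum_univ_three, Matrix.single, Matrix.diag]; ring)
  have hb1 : |(σ 1 2).re|^2 + |(σ 1 2).im|^2 ≤ (σ 1 1).re * (σ 2 2).re := by
    have h := entry_sq_le σ hσ 1 2
    rw [Complex.sq_norm, Complex.normSq_apply] at h
    rw [sq_abs, sq_abs]; nlinarith [h]
  have hb2 : |(σ 0 2).re|^2 + |(σ 0 2).im|^2 ≤ (σ 0 0).re * (σ 2 2).re := by
    have h := entry_sq_le σ hσ 0 2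
    rw [Complex.sq_norm, Complex.normSq_apply] at h
    rw [sq_abs, sq_abs]; nlinarith [h]
  have hb3 : |(σ 0 1).re|^2 + |(σ 0 1).im|^2 ≤ (σ 0 0).re * (σ 1 1).re := by
    have h := entry_sq_le σ hσ 0 1
    rw [Complex.sq_norm, Complex.normSq_apply] at h
    rw [sq_abs, sq_abs]; nlinarith [h]
  have hsum : (σ 0 0).re + (σ 1 1).re + (σ 2 2).re = 1 := by
    have := congrArg Complex.re htr
    simpa [Matrix.trace, Fin.sum_univ_three, Matrix.diag] using this
  rw [Fin.sum_univ_three, Fin.sum_univ_three, Fin.sum_univ_three,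
    hX0, hX1, hX2, hY0, hY1, hY2, hZ0, hZ1, hZ2]
  have key := real_main ((σ 0 0).re) ((σ 1 1).re) ((σ 2 2).re)
    |(σ 1 2).re| |(σ 0 2).re| |(σ 0 1).re| |(σ 1 2).im| |(σ 0 2).im| |(σ 0 1).im|
    (diag_re_nonneg σ hσ 0) (diag_re_nonneg σ hσ 1) (diag_re_nonneg σ hσ 2) hsum
    (abs_nonneg _) (abs_nonneg _) (abs_nonneg _) (abs_nonneg _) (abs_nonneg _) (abs_nonneg _)
    hb1 hb2 hb3
  ring_nf at key ⊢
  linarith [key]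

/-- For every separable state ρ on ℂ³ ⊗ ℂ³, the total absolute correlation of the nine
subspace-Pauli pairs is at most 4. -/
theorem stmt_18 (ρ : Matrix (Fin 3 × Fin 3) (Fin 3 × Fin 3) ℂ)
    (hsep : ∃ (k : ℕ) (c : Fin k → ℝ) (ρ₁ ρ₂ : Fin k → Matrix (Fin 3) (Fin 3) ℂ),
        (∀ j, 0 ≤ c j) ∧ (∑ j, c j) = 1 ∧
        (∀ j, (ρ₁ j).PosSemidef ∧ (ρ₁ j).trace = 1) ∧
        (∀ j, (ρ₂ j).PosSemidef ∧ (ρ₂ j).trace = 1) ∧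
        ρ = ∑ j, (c j : ℂ) • (ρ₁ j ⊗ₖ ρ₂ j)) :
    ∑ i : Fin 3, ∑ j : Fin 3,
        (‖(ρ * (subX i ⊗ₖ subX j)).trace‖ +
          ‖(ρ * (subY i ⊗ₖ subY j)).trace‖ +
          ‖(ρ * (subZ i ⊗ₖ subZ j)).trace‖) ≤ 4 := by
  obtain ⟨n, c, ρ₁, ρ₂, hc, hcsum, h1, h2, hρ⟩ := hsep
  have tr_formula : ∀ (P Q : Matrix (Fin 3) (Fin 3) ℂ),
      (ρ * (P ⊗ₖ Q)).trace = ∑ m, (c m : ℂ) * ((ρ₁ m * P).trace * (ρ₂ m * Q).trace) := by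
    intro P Q
    rw [hρ, Finset.sum_mul, Matrix.trace_sum]
    refine Finset.sum_congr rfl fun m _ => ?_
    rw [Matrix.smul_mul, Matrix.trace_smul, ← Matrix.mul_kronecker_mul, Matrix.trace_kronecker]
    simp [smul_eq_mul]
  have abs_bound : ∀ (P Q : Matrix (Fin 3) (Fin 3) ℂ),
      ‖(ρ * (P ⊗ₖ Q)).trace‖ ≤
      ∑ m, c m * (‖(ρ₁ m * P).trace‖ * ‖(ρ₂ m * Q).trace‖) := by
    intro P Q
    rw [tr_formula]
    refine (norm_sum_le _ _).trans (le_of_eq (Finset.sum_congr rfl fun m _ => ?_))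
    rw [norm_mul, norm_mul, Complex.norm_real, Real.norm_eq_abs, abs_of_nonneg (hc m)]
  set x1 : Fin n → Fin 3 → ℝ := fun m i => ‖(ρ₁ m * subX i).trace‖ with hx1
  set x2 : Fin n → Fin 3 → ℝ := fun m i => ‖(ρ₂ m * subX i).trace‖ with hx2
  set y1 : Fin n → Fin 3 → ℝ := fun m i => ‖(ρ₁ m * subY i).trace‖ with hy1
  set y2 : Fin n → Fin 3 → ℝ := fun m i => ‖(ρ₂ m * subY i).trace‖ with hy2
  set z1 : Fin n → Fin 3 → ℝ := fun m i => ‖(ρ₁ m * subZ i).trace‖ with hz1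
  set z2 : Fin n → Fin 3 → ℝ := fun m i => ‖(ρ₂ m * subZ i).trace‖ with hz2
  have step1 : ∑ i : Fin 3, ∑ j : Fin 3,
      (‖(ρ * (subX i ⊗ₖ subX j)).trace‖ +
        ‖(ρ * (subY i ⊗ₖ subY j)).trace‖ +
        ‖(ρ * (subZ i ⊗ₖ subZ j)).trace‖) ≤
      ∑ i : Fin 3, ∑ j : Fin 3, ∑ m,
        c m * (x1 m i * x2 m j + y1 m i * y2 m j + z1 m i * z2 m j) := by
    refine Finset.sum_le_sum fun i _ => Finset.sum_le_sum fun j _ => ?_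
    have hXb := abs_bound (subX i) (subX j)
    have hYb := abs_bound (subY i) (subY j)
    have hZb := abs_bound (subZ i) (subZ j)
    calc ‖(ρ * (subX i ⊗ₖ subX j)).trace‖ +
          ‖(ρ * (subY i ⊗ₖ subY j)).trace‖ +
          ‖(ρ * (subZ i ⊗ₖ subZ j)).trace‖ ≤
        (∑ m, c m * (x1 m i * x2 m j)) + (∑ m, c m * (y1 m i * y2 m j)) +
        (∑ m, c m * (z1 m i * z2 m j)) := by
          exact add_le_add (add_le_add hXb hYb) hZb
      _ = ∑ m, c m * (x1 m i * x2 m j + y1 m i * y2 m j + z1 m i * z2 m j) := by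
          rw [← Finset.sum_add_distrib, ← Finset.sum_add_distrib]
          exact Finset.sum_congr rfl fun m _ => by ring
  have step2 : ∑ i : Fin 3, ∑ j : Fin 3, ∑ m,
      c m * (x1 m i * x2 m j + y1 m i * y2 m j + z1 m i * z2 m j) =
      ∑ m, c m * ((∑ i, x1 m i) * (∑ j, x2 m j) + (∑ i, y1 m i) * (∑ j, y2 m j) +
        (∑ i, z1 m i) * (∑ j, z2 m j)) := by
    rw [show (∑ i : Fin 3, ∑ j : Fin 3, ∑ m,
        c m * (x1 m i * x2 m j + y1 m i * y2 m j + z1 m i * z2 m j)) =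
        ∑ m, ∑ i : Fin 3, ∑ j : Fin 3,
        c m * (x1 m i * x2 m j + y1 m i * y2 m j + z1 m i * z2 m j) from
      (Finset.sum_congr rfl fun i _ => Finset.sum_comm).trans Finset.sum_comm]
    refine Finset.sum_congr rfl fun m _ => ?_
    calc ∑ i : Fin 3, ∑ j : Fin 3, c m * (x1 m i * x2 m j + y1 m i * y2 m j + z1 m i * z2 m j)
        = (∑ i : Fin 3, ∑ j : Fin 3, c m * (x1 m i * x2 m j)) +
          (∑ i : Fin 3, ∑ j : Fin 3, c m * (y1 m i * y2 m j)) +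
          (∑ i : Fin 3, ∑ j : Fin 3, c m * (z1 m i * z2 m j)) := by
          simp only [← Finset.sum_add_distrib]
          exact Finset.sum_congr rfl fun i _ => Finset.sum_congr rfl fun j _ => by ring
      _ = c m * ((∑ i, x1 m i) * (∑ j, x2 m j)) + c m * ((∑ i, y1 m i) * (∑ j, y2 m j)) +
          c m * ((∑ i, z1 m i) * (∑ j, z2 m j)) := by
          rw [Finset.sum_mul_sum, Finset.sum_mul_sum, Finset.sum_mul_sum,
            Finset.mul_sum, Finset.mul_sum, Finset.mul_sum]
          refine congrArg₂ (· + ·) (congrArg₂ (· + ·) ?_ ?_) ?_ <;>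
            exact Finset.sum_congr rfl fun i _ => by rw [Finset.mul_sum]
      _ = c m * ((∑ i, x1 m i) * (∑ j, x2 m j) + (∑ i, y1 m i) * (∑ j, y2 m j) +
          (∑ i, z1 m i) * (∑ j, z2 m j)) := by ring
  have state1 : ∀ m, (∑ i, x1 m i)^2 + (∑ i, y1 m i)^2 + (∑ i, z1 m i)^2 ≤ 4 :=
    fun m => state_bound (ρ₁ m) (h1 m).1 (h1 m).2
  have state2 : ∀ m, (∑ i, x2 m i)^2 + (∑ i, y2 m i)^2 + (∑ i, z2 m i)^2 ≤ 4 :=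
    fun m => state_bound (ρ₂ m) (h2 m).1 (h2 m).2
  have step3 : ∑ m, c m * ((∑ i, x1 m i) * (∑ j, x2 m j) + (∑ i, y1 m i) * (∑ j, y2 m j) +
      (∑ i, z1 m i) * (∑ j, z2 m j)) ≤ ∑ m, c m * 4 := by
    refine Finset.sum_le_sum fun m _ => mul_le_mul_of_nonneg_left ?_ (hc m)
    nlinarith [state1 m, state2 m, sq_nonneg ((∑ i, x1 m i) - (∑ j, x2 m j)),
      sq_nonneg ((∑ i, y1 m i) - (∑ j, y2 m j)), sq_nonneg ((∑ i, z1 m i) - (∑ j, z2 m j))]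
  calc _ ≤ _ := step1
    _ = _ := step2
    _ ≤ ∑ m, c m * 4 := step3
    _ = 4 := by rw [← Finset.sum_mul, hcsum, one_mul]

end
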